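/- Let (X, w) be a weighted pure d-dimensional simplicial complex, 1 ≤ k ≤ d, and let f ∈ C^k(X; ℝ) be a proper 0-level cochain, i.e. f ∈ im(d_{k−1} ⋯ d_0) and d_{−1}^* ⋯ d_{k−1}^* f = 0. Then there exists a 0-cochain g ∈ C^0(X; ℝ) such that: (1) ⟨g, 1⟩ = 0 (equivalently d_{−1}^* g = 0); (2) ‖g‖² = ‖f‖²; and (3) ‖d_0^* ⋯ d_{k−1}^* f‖² = ‖d_{k−1} ⋯ d_0 g‖². -/

import Mathlib

/-!
Weighted pure simplicial complexes, links, cochains, signless differentials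
and high dimensional random walk operators.

Conventions: faces are `Finset`s of vertices. A cochain "of dimension `k`"
(an element of `C^k(X;ℝ)`) is represented by a function `Finset V → ℝ`
evaluated on faces of **cardinality** `c = k + 1`; all operators are indexed
by cardinality.
-/

open Finset

namespace HDRW

noncomputable section

variable {V : Type*} [DecidableEq V] [Fintype V]

/-- A weighted family of faces (the data of a weighted complex or of a link). -/
structure WFam (V : Type*) [DecidableEq V] [Fintype V] where
  faces : Finset (Finset V)
  w : Finset V → ℝ

namespace WFam

/-- The faces of cardinality `c` (i.e. of dimension `c - 1`). -/
def dimFaces (Y : WFam V) (c : ℕ) : Finset (Finset V) :=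
  Y.faces.filter fun σ => σ.card = c

/-- The link of a face `τ`, as a weighted family; the weights are
`w_τ(s) = w (s ∪ τ) / (C(|s| + |τ|, |τ|) * w τ)`. -/
def link (Y : WFam V) (τ : Finset V) : WFam V where
  faces := Finset.univ.powerset.filter fun s => Disjoint s τ ∧ s ∪ τ ∈ Y.faces
  w := fun s => Y.w (s ∪ τ) / (((s.card + τ.card).choose τ.card : ℝ) * Y.w τ)

/-- The inner product of two `c`-cochains: `⟨f, g⟩ = Σ_{σ} w σ * f σ * g σ`. -/
def inner (Y : WFam V) (c : ℕ) (f g : Finset V → ℝ) : ℝ :=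
  ∑ σ ∈ Y.dimFaces c, Y.w σ * (f σ * g σ)

/-- The squared norm `‖f‖² = ⟨f, f⟩` of a `c`-cochain. -/
def norm2 (Y : WFam V) (c : ℕ) (f : Finset V → ℝ) : ℝ := Y.inner c f f

end WFam

/-- The signless differential `d` from cochains on faces of cardinality `c`
(dimension `c-1`) to cochains on faces of cardinality `c+1`:
`(d f)(σ) = (1/(c+1)) Σ_{τ ⊆ σ, |τ| = c} f τ`. -/
def sDiff (c : ℕ) (f : Finset V → ℝ) : Finset V → ℝ :=
  fun σ => ((c : ℝ) + 1)⁻¹ * ∑ τ ∈ σ.powerset.filter (fun τ => τ.card = c), f τ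

/-- Iterated signless differential `C_a → C_{a+n}` (in cardinality indexing),
i.e. `d_{a+n-2} ⋯ d_{a-1}` in dimension indexing. -/
def sDiffIter (a : ℕ) : ℕ → (Finset V → ℝ) → (Finset V → ℝ)
  | 0, f => f
  | n + 1, f => sDiff (a + n) (sDiffIter a n f)

namespace WFam

/-- The adjoint `d^*` of the signless differential, from cochains on faces of
cardinality `c+1` to cochains on faces of cardinality `c`; it is given by the
explicit formula `(d^* f)(τ) = Σ_{σ ∈ X(c), τ ⊆ σ} w_τ(σ ∖ τ) * f σ` (a sum
over the cardinality-`(c+1)` faces containing `τ`). -/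
def sAdj (Y : WFam V) (c : ℕ) (f : Finset V → ℝ) : Finset V → ℝ :=
  fun τ => ∑ σ ∈ (Y.dimFaces (c + 1)).filter (fun σ => τ ⊆ σ),
    (Y.link τ).w (σ \ τ) * f σ

/-- Iterated adjoint of the signless differential, `C_{a+n} → C_a`
(in cardinality indexing), i.e. `d_{a-1}^* ⋯ d_{a+n-2}^*`. -/
def sAdjIter (Y : WFam V) : ℕ → ℕ → (Finset V → ℝ) → (Finset V → ℝ)
  | _, 0, f => f
  | a, n + 1, f => Y.sAdj a (sAdjIter Y (a + 1) n f)

/-- The non-lazy up-down random walk operator `M⁺` on cochains of cardinality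
`c` (dimension `k = c-1`): `(M⁺ f)(σ) = (1/(k+1)) Σ_{τ, σ ∪ τ ∈ X(k+1)} w_σ(τ∖σ) f τ`. -/
def nonLazy (Y : WFam V) (c : ℕ) (f : Finset V → ℝ) : Finset V → ℝ :=
  fun σ => (c : ℝ)⁻¹ *
    ∑ τ ∈ (Y.dimFaces c).filter (fun τ => σ ∪ τ ∈ Y.dimFaces (c + 1)),
      (Y.link σ).w (τ \ σ) * f τ

/-- The (lazy) up-down random walk operator `U` on cochains of cardinality `c`
(dimension `k = c-1`):
`(U f)(σ) = (1/(k+2)) f σ + (1/(k+2)) Σ_{τ, σ ∪ τ ∈ X(k+1)} w_σ(τ∖σ) f τ`. -/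
def upDown (Y : WFam V) (c : ℕ) (f : Finset V → ℝ) : Finset V → ℝ :=
  fun σ => ((c : ℝ) + 1)⁻¹ * f σ + ((c : ℝ) + 1)⁻¹ *
    ∑ τ ∈ (Y.dimFaces c).filter (fun τ => σ ∪ τ ∈ Y.dimFaces (c + 1)),
      (Y.link σ).w (τ \ σ) * f τ

/-- The down-up random walk operator `D` on cochains of cardinality `c`
(dimension `k = c-1`). -/
def downUp (Y : WFam V) (c : ℕ) (f : Finset V → ℝ) : Finset V → ℝ :=
  fun σ => (c : ℝ)⁻¹ *
      (∑ τ' ∈ σ.powerset.filter (fun τ' => τ'.card = c - 1), (Y.link τ').w (σ \ τ')) * f σ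
    + (c : ℝ)⁻¹ *
      ∑ τ ∈ (Y.dimFaces c).filter (fun τ => τ ≠ σ ∧ σ ∩ τ ∈ Y.dimFaces (c - 1)),
        (Y.link (σ ∩ τ)).w (τ \ σ) * f τ

/-- The `i`-down-up operator `D^i = d ⋯ d d^* ⋯ d^*` (going down `i+1` steps and
back up) on cochains of cardinality `c` (dimension `k = c-1`); in dimension
indexing this is `D_k^i = d_{k-1} ⋯ d_{k-i-1} d_{k-i-1}^* ⋯ d_{k-1}^*`. -/
def downUpIter (Y : WFam V) (c i : ℕ) (f : Finset V → ℝ) : Finset V → ℝ :=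
  sDiffIter (c - (i + 1)) (i + 1) (Y.sAdjIter (c - (i + 1)) (i + 1) f)

/-- `Y` (through its 1-skeleton) is a `γ`-(one sided) spectral expander:
every function on the vertices orthogonal to the constants has Rayleigh
quotient of the non-lazy random walk at most `γ` (Rayleigh characterization of
"the second largest eigenvalue of `M₀⁺` is at most `γ`"). -/
def isExpander (Y : WFam V) (γ : ℝ) : Prop :=
  ∀ f : Finset V → ℝ, Y.inner 1 f (fun _ => 1) = 0 →
    Y.inner 1 (Y.nonLazy 1 f) f ≤ γ * Y.norm2 1 f

/-- `Y` (through its 1-skeleton) is connected: the eigenvalue `1` of the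
non-lazy random walk `M₀⁺` has multiplicity one, i.e. every nonzero function on
the vertices orthogonal to the constants has Rayleigh quotient strictly
less than `1`. -/
def isConnected (Y : WFam V) : Prop :=
  ∀ f : Finset V → ℝ, Y.inner 1 f (fun _ => 1) = 0 → Y.norm2 1 f ≠ 0 →
    Y.inner 1 (Y.nonLazy 1 f) f < Y.norm2 1 f

/-- `f` is an `i`-level cochain of cardinality `c` (dimension `k = c-1`) with
respect to localization: for every face `σ` of cardinality `i` (i.e. of
dimension `i-1`), the localization `f_σ` is orthogonal to the constants in the
link `X_σ`. -/
def isLevel (Y : WFam V) (i c : ℕ) (f : Finset V → ℝ) : Prop :=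
  ∀ σ ∈ Y.dimFaces i,
    (Y.link σ).inner (c - i) (fun s => f (σ ∪ s)) (fun _ => 1) = 0

/-- `f` is a proper `i`-level cochain of cardinality `c`: it is an `i`-level
cochain which is in addition orthogonal to every `(i+1)`-level cochain. -/
def isProperLevel (Y : WFam V) (i c : ℕ) (f : Finset V → ℝ) : Prop :=
  Y.isLevel i c f ∧ ∀ g : Finset V → ℝ, Y.isLevel (i + 1) c g → Y.inner c f g = 0

end WFam

/-- The coboundary operator on oriented cochains (represented by their values
on the increasing ordering of each face, with respect to a linear order on the
vertices): `(δ f)(σ) = Σ_{j} (-1)^j f(σ ∖ {j-th smallest element of σ})`. -/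
def coboundary {V : Type*} [LinearOrder V] [Fintype V] (f : Finset V → ℝ) :
    Finset V → ℝ :=
  fun σ => ∑ v ∈ σ, (-1 : ℝ) ^ (σ.filter (fun u => u < v)).card * f (σ.erase v)

/-- A weighted pure `d`-dimensional simplicial complex: a downward closed
family of faces, each contained in a face of cardinality `d+1`
(dimension `d`), together with a weight function `w : X → (0, 1]` summing to
`1` on the top faces and satisfying the averaging recurrence on lower faces. -/
structure WSC (V : Type*) [DecidableEq V] [Fintype V] (d : ℕ) extends WFam V where
  empty_mem : ∅ ∈ faces
  down_closed : ∀ ⦃σ⦄, σ ∈ faces → ∀ ⦃τ⦄, τ ⊆ σ → τ ∈ faces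
  isPure : ∀ σ ∈ faces, ∃ σ' ∈ faces, σ ⊆ σ' ∧ σ'.card = d + 1
  w_pos : ∀ σ ∈ faces, 0 < w σ
  w_le_one : ∀ σ ∈ faces, w σ ≤ 1
  w_sum_top : ∑ σ ∈ faces.filter (fun σ => σ.card = d + 1), w σ = 1
  w_down : ∀ τ ∈ faces, τ.card ≤ d →
    w τ = (((d + 1).choose τ.card : ℝ))⁻¹ *
      ∑ σ ∈ faces.filter (fun σ => σ.card = d + 1 ∧ τ ⊆ σ), w σ


variable {d : ℕ}

/-! ### Auxiliary lemmas -/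

theorem mem_dimFaces {Y : WFam V} {c : ℕ} {σ : Finset V} :
    σ ∈ Y.dimFaces c ↔ σ ∈ Y.faces ∧ σ.card = c := Finset.mem_filter

theorem inner_comm (Y : WFam V) (c : ℕ) (F G : Finset V → ℝ) :
    Y.inner c F G = Y.inner c G F := by
  unfold WFam.inner
  exact Finset.sum_congr rfl fun σ _ => by ring

theorem inner_congr (Y : WFam V) (c : ℕ) {F F' G G' : Finset V → ℝ}
    (hF : ∀ σ ∈ Y.dimFaces c, F σ = F' σ) (hG : ∀ σ ∈ Y.dimFaces c, G σ = G' σ) :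
    Y.inner c F G = Y.inner c F' G' := by
  unfold WFam.inner
  exact Finset.sum_congr rfl fun σ hσ => by rw [hF σ hσ, hG σ hσ]

theorem inner_combo_left (Y : WFam V) (c : ℕ) (a b : ℝ) (F G K : Finset V → ℝ) :
    Y.inner c (fun σ => a * F σ + b * G σ) K
      = a * Y.inner c F K + b * Y.inner c G K := by
  unfold WFam.inner
  rw [Finset.mul_sum, Finset.mul_sum, ← Finset.sum_add_distrib]
  exact Finset.sum_congr rfl fun σ _ => by ring

theorem norm2_combo (Y : WFam V) (c : ℕ) (a b : ℝ) (F G : Finset V → ℝ) :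
    Y.norm2 c (fun σ => a * F σ + b * G σ)
      = a^2 * Y.norm2 c F + 2*a*b * Y.inner c F G + b^2 * Y.norm2 c G := by
  unfold WFam.norm2 WFam.inner
  rw [Finset.mul_sum, Finset.mul_sum, Finset.mul_sum, ← Finset.sum_add_distrib,
    ← Finset.sum_add_distrib]
  exact Finset.sum_congr rfl fun σ _ => by ring

theorem w_nonneg (X : WSC V d) {c : ℕ} {σ : Finset V}
    (hσ : σ ∈ X.toWFam.dimFaces c) : 0 ≤ X.w σ :=
  (X.w_pos σ (mem_dimFaces.1 hσ).1).le

theorem norm2_nonneg (X : WSC V d) (c : ℕ) (F : Finset V → ℝ) :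
    0 ≤ X.toWFam.norm2 c F :=
  Finset.sum_nonneg fun σ hσ => mul_nonneg (w_nonneg X hσ) (mul_self_nonneg _)

theorem cs (X : WSC V d) (c : ℕ) (F G : Finset V → ℝ) :
    (X.toWFam.inner c F G)^2 ≤ X.toWFam.norm2 c F * X.toWFam.norm2 c G := by
  unfold WFam.norm2 WFam.inner
  have h1 : ∀ σ ∈ X.toWFam.dimFaces c, X.w σ * (F σ * G σ)
      = (Real.sqrt (X.w σ) * F σ) * (Real.sqrt (X.w σ) * G σ) := fun σ hσ => by
    rw [show (Real.sqrt (X.w σ) * F σ) * (Real.sqrt (X.w σ) * G σ)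
        = (Real.sqrt (X.w σ) * Real.sqrt (X.w σ)) * (F σ * G σ) by ring,
      Real.mul_self_sqrt (w_nonneg X hσ)]
  have h2 : ∀ σ ∈ X.toWFam.dimFaces c, X.w σ * (F σ * F σ)
      = (Real.sqrt (X.w σ) * F σ)^2 := fun σ hσ => by
    rw [mul_pow, Real.sq_sqrt (w_nonneg X hσ)]; ring
  have h3 : ∀ σ ∈ X.toWFam.dimFaces c, X.w σ * (G σ * G σ)
      = (Real.sqrt (X.w σ) * G σ)^2 := fun σ hσ => by
    rw [mul_pow, Real.sq_sqrt (w_nonneg X hσ)]; ring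
  rw [Finset.sum_congr rfl h1, Finset.sum_congr rfl h2, Finset.sum_congr rfl h3]
  exact Finset.sum_mul_sq_le_sq_mul_sq _ _ _

theorem sDiffIter_combo (a n : ℕ) (r s : ℝ) (F G : Finset V → ℝ) :
    sDiffIter a n (fun τ => r * F τ + s * G τ)
      = fun σ => r * sDiffIter a n F σ + s * sDiffIter a n G σ := by
  induction n with
  | zero => rfl
  | succ n ih =>
    funext σ
    show sDiff (a+n) (sDiffIter a n fun τ => r * F τ + s * G τ) σ
      = r * sDiff (a+n) (sDiffIter a n F) σ + s * sDiff (a+n) (sDiffIter a n G) σ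
    simp only [ih, sDiff]
    rw [Finset.sum_add_distrib, ← Finset.mul_sum, ← Finset.mul_sum]
    ring

theorem sDiffIter_zero (a n : ℕ) :
    sDiffIter a n (fun _ => (0:ℝ)) = fun (_ : Finset V) => (0:ℝ) := by
  induction n with
  | zero => rfl
  | succ n ih =>
    funext σ
    show sDiff (a+n) (sDiffIter a n fun _ => (0:ℝ)) σ = 0
    simp [ih, sDiff]

theorem sDiffIter_one (n : ℕ) :
    ∀ σ : Finset V, σ.card = n + 1 → sDiffIter 1 n (fun _ => (1:ℝ)) σ = 1 := by
  induction n with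
  | zero => intro σ _; rfl
  | succ n ih =>
    intro σ hσ
    show sDiff (1+n) (sDiffIter 1 n fun _ => (1:ℝ)) σ = 1
    unfold sDiff
    have h1 : ∀ τ ∈ σ.powerset.filter (fun τ => τ.card = 1 + n),
        sDiffIter 1 n (fun _ => (1:ℝ)) τ = 1 := by
      intro τ hτ
      exact ih τ (by have := (Finset.mem_filter.1 hτ).2; omega)
    rw [Finset.sum_congr rfl h1, Finset.sum_const, ← Finset.powersetCard_eq_filter,
      Finset.card_powersetCard, hσ]
    have : (n + 1 + 1).choose (1 + n) = n + 2 := by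
      rw [show 1 + n = n + 1 from by omega, Nat.choose_succ_self_right]
    rw [this, nsmul_eq_mul, mul_one]
    have hne : ((1+n : ℕ) : ℝ) + 1 ≠ 0 := by positivity
    field_simp
    push_cast
    ring

theorem filter_powerset_eq (X : WSC V d) {c : ℕ} {σ : Finset V} (hσ : σ ∈ X.faces) :
    σ.powerset.filter (fun τ => τ.card = c)
      = (X.toWFam.dimFaces c).filter (fun τ => τ ⊆ σ) := by
  ext τ
  simp only [Finset.mem_filter, Finset.mem_powerset, WFam.dimFaces]
  constructor
  · rintro ⟨hs, hc⟩
    exact ⟨⟨X.down_closed hσ hs, hc⟩, hs⟩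
  · rintro ⟨⟨_, hc⟩, hs⟩
    exact ⟨hs, hc⟩

theorem adj (X : WSC V d) (c : ℕ) (F G : Finset V → ℝ) :
    X.toWFam.inner (c+1) (sDiff c F) G = X.toWFam.inner c F (X.toWFam.sAdj c G) := by
  unfold WFam.inner WFam.sAdj WFam.link sDiff
  have L : ∀ σ ∈ X.toWFam.dimFaces (c+1),
      X.w σ * ((((c:ℝ)+1)⁻¹ * ∑ τ ∈ σ.powerset.filter (fun τ => τ.card = c), F τ) * G σ)
      = ∑ τ ∈ X.toWFam.dimFaces c,
          (if τ ⊆ σ then ((c:ℝ)+1)⁻¹ * (X.w σ * (F τ * G σ)) else 0) := by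
    intro σ hσ
    rw [← Finset.sum_filter, ← filter_powerset_eq X (mem_dimFaces.1 hσ).1,
      Finset.mul_sum, Finset.sum_mul, Finset.mul_sum]
    exact Finset.sum_congr rfl fun τ _ => by ring
  have R : ∀ τ ∈ X.toWFam.dimFaces c,
      X.w τ * (F τ * ∑ σ ∈ (X.toWFam.dimFaces (c+1)).filter (fun σ => τ ⊆ σ),
        X.w (σ \ τ ∪ τ) / ((((σ \ τ).card + τ.card).choose τ.card : ℝ) * X.w τ) * G σ)
      = ∑ σ ∈ X.toWFam.dimFaces (c+1),
          (if τ ⊆ σ then ((c:ℝ)+1)⁻¹ * (X.w σ * (F τ * G σ)) else 0) := by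
    intro τ hτ
    obtain ⟨hτf, hτc⟩ := mem_dimFaces.1 hτ
    rw [← Finset.sum_filter, Finset.mul_sum, Finset.mul_sum]
    refine Finset.sum_congr rfl fun σ hσ => ?_
    obtain ⟨hσd, hsub⟩ := Finset.mem_filter.1 hσ
    obtain ⟨hσf, hσc⟩ := mem_dimFaces.1 hσd
    have hsd : (σ \ τ).card = 1 := by rw [Finset.card_sdiff_of_subset hsub]; omega
    have hun : σ \ τ ∪ τ = σ := Finset.sdiff_union_of_subset hsub
    rw [hsd, hun, hτc,
      show (1 + c).choose c = c + 1 from by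
        rw [show 1 + c = c + 1 from by omega, Nat.choose_succ_self_right]]
    have hwτ : X.w τ ≠ 0 := (X.w_pos τ hτf).ne'
    have hc1 : ((c:ℝ)+1) ≠ 0 := by positivity
    push_cast
    field_simp
  rw [Finset.sum_congr rfl L, Finset.sum_congr rfl R, Finset.sum_comm]

theorem sAdjIter_succ (Y : WFam V) (n : ℕ) :
    ∀ (a : ℕ) (f : Finset V → ℝ),
      Y.sAdjIter a (n+1) f = Y.sAdjIter a n (Y.sAdj (a+n) f) := by
  induction n with
  | zero => intro a f; rfl
  | succ n ih =>
    intro a f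
    show Y.sAdj a (Y.sAdjIter (a+1) (n+1) f) = Y.sAdj a (Y.sAdjIter (a+1) n (Y.sAdj (a+(n+1)) f))
    rw [ih (a+1) f, show a+1+n = a+(n+1) from by omega]

theorem adj_iter (X : WSC V d) (n : ℕ) :
    ∀ (a : ℕ) (F G : Finset V → ℝ),
      X.toWFam.inner (a+n) (sDiffIter a n F) G
        = X.toWFam.inner a F (X.toWFam.sAdjIter a n G) := by
  induction n with
  | zero => intro a F G; rfl
  | succ n ih =>
    intro a F G
    calc X.toWFam.inner (a+(n+1)) (sDiffIter a (n+1) F) G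
        = X.toWFam.inner (a+n) (sDiffIter a n F) (X.toWFam.sAdj (a+n) G) :=
          adj X (a+n) (sDiffIter a n F) G
      _ = X.toWFam.inner a F (X.toWFam.sAdjIter a n (X.toWFam.sAdj (a+n) G)) :=
          ih a F (X.toWFam.sAdj (a+n) G)
      _ = X.toWFam.inner a F (X.toWFam.sAdjIter a (n+1) G) := by
          rw [← sAdjIter_succ]

theorem w_down' (X : WSC V d) {σ : Finset V} (hσ : σ ∈ X.faces) (hc : σ.card ≤ d + 1) :
    X.w σ = (((d+1).choose σ.card : ℝ))⁻¹ *
      ∑ T ∈ X.faces.filter (fun T => T.card = d + 1 ∧ σ ⊆ T), X.w T := by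
  rcases Nat.lt_or_ge σ.card (d+1) with hlt | hge
  · exact X.w_down σ hσ (by omega)
  · have hcard : σ.card = d+1 := by omega
    have hset : X.faces.filter (fun T => T.card = d + 1 ∧ σ ⊆ T) = {σ} := by
      ext T
      simp only [Finset.mem_filter, Finset.mem_singleton]
      constructor
      · rintro ⟨hTf, hTc, hsub⟩
        exact (Finset.eq_of_subset_of_card_le hsub (by omega)).symm
      · rintro rfl
        exact ⟨hσ, hcard, Finset.Subset.refl _⟩
    rw [hset, Finset.sum_singleton, hcard, Nat.choose_self]
    norm_num

theorem sum_up (X : WSC V d) {c : ℕ} (hc : c ≤ d) {τ : Finset V} (hτ : τ ∈ X.faces)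
    (hcard : τ.card = c) :
    ∑ σ ∈ (X.toWFam.dimFaces (c+1)).filter (fun σ => τ ⊆ σ), X.w σ
      = ((c:ℝ)+1) * X.w τ := by
  have step1 : ∀ σ ∈ (X.toWFam.dimFaces (c+1)).filter (fun σ => τ ⊆ σ),
      X.w σ = (((d+1).choose (c+1) : ℝ))⁻¹ *
        ∑ T ∈ X.faces.filter (fun T => T.card = d + 1 ∧ τ ⊆ T),
          (if σ ⊆ T then X.w T else 0) := by
    intro σ hσ
    obtain ⟨hσd, hsub⟩ := Finset.mem_filter.1 hσ
    obtain ⟨hσf, hσc⟩ := mem_dimFaces.1 hσd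
    rw [w_down' X hσf (by omega), hσc]
    congr 1
    rw [← Finset.sum_filter]
    apply Finset.sum_congr _ (fun _ _ => rfl)
    ext T
    simp only [Finset.mem_filter]
    constructor
    · rintro ⟨hf, hcard', hsub'⟩
      exact ⟨⟨hf, hcard', hsub.trans hsub'⟩, hsub'⟩
    · rintro ⟨⟨hf, hcard', _⟩, hsub'⟩
      exact ⟨hf, hcard', hsub'⟩
  rw [Finset.sum_congr rfl step1, ← Finset.mul_sum, Finset.sum_comm]
  have step2 : ∀ T ∈ X.faces.filter (fun T => T.card = d + 1 ∧ τ ⊆ T),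
      (∑ σ ∈ (X.toWFam.dimFaces (c+1)).filter (fun σ => τ ⊆ σ),
        if σ ⊆ T then X.w T else 0) = ((d+1-c : ℕ) : ℝ) * X.w T := by
    intro T hT
    obtain ⟨hTf, hTc, hτT⟩ := Finset.mem_filter.1 hT
    rw [← Finset.sum_filter, Finset.sum_const, nsmul_eq_mul]
    congr 1
    norm_cast
    show (((X.toWFam.dimFaces (c+1)).filter (fun σ => τ ⊆ σ)).filter
        (fun σ => σ ⊆ T)).card = d+1-c
    rw [Finset.card_nbij' (fun σ => σ \ τ) (fun s => s ∪ τ) ?_ ?_ ?_ ?_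
      (t := (T \ τ).powersetCard 1)]
    · rw [Finset.card_powersetCard, Finset.card_sdiff_of_subset hτT, hTc, hcard,
        Nat.choose_one_right]
    · intro σ hσ
      obtain ⟨hσ1, hσT⟩ := Finset.mem_filter.1 hσ
      obtain ⟨hσd, hτσ⟩ := Finset.mem_filter.1 hσ1
      obtain ⟨hσf, hσc⟩ := mem_dimFaces.1 hσd
      simp only [Finset.mem_coe, Finset.mem_powersetCard]
      constructor
      · exact Finset.sdiff_subset_sdiff hσT (Finset.Subset.refl τ)
      · rw [Finset.card_sdiff_of_subset hτσ]; omega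
    · intro s hs
      rw [Finset.mem_coe, Finset.mem_powersetCard] at hs
      obtain ⟨hsT, hsc⟩ := hs
      have hdisj : Disjoint s τ := Finset.disjoint_of_subset_left hsT
        (Finset.sdiff_disjoint)
      have hsubT : s ∪ τ ⊆ T :=
        Finset.union_subset (hsT.trans Finset.sdiff_subset) hτT
      refine Finset.mem_filter.2 ⟨Finset.mem_filter.2 ⟨mem_dimFaces.2
        ⟨X.down_closed hTf hsubT, ?_⟩, Finset.subset_union_right⟩, hsubT⟩
      rw [Finset.card_union_of_disjoint hdisj]; omega
    · intro σ hσ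
      obtain ⟨hσ1, _⟩ := Finset.mem_filter.1 hσ
      obtain ⟨_, hτσ⟩ := Finset.mem_filter.1 hσ1
      exact Finset.sdiff_union_of_subset hτσ
    · intro s hs
      rw [Finset.mem_coe, Finset.mem_powersetCard] at hs
      exact Finset.union_sdiff_cancel_right
        (Finset.disjoint_of_subset_left hs.1 Finset.sdiff_disjoint)
  rw [Finset.sum_congr rfl step2, ← Finset.mul_sum]
  have hwd := X.w_down τ hτ (by omega)
  rw [hcard] at hwd
  rw [hwd]
  have h1 : ((d+1).choose (c+1) : ℝ) ≠ 0 := by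
    exact_mod_cast (Nat.choose_pos (by omega : c+1 ≤ d+1)).ne'
  have h0 : ((d+1).choose c : ℝ) ≠ 0 := by
    exact_mod_cast (Nat.choose_pos (by omega : c ≤ d+1)).ne'
  have key : ((d+1).choose (c+1) : ℝ) * ((c:ℝ)+1)
      = ((d+1).choose c : ℝ) * ((d+1-c : ℕ) : ℝ) := by
    exact_mod_cast congrArg (Nat.cast : ℕ → ℝ) (Nat.choose_succ_right_eq (d+1) c)
  field_simp
  nlinarith [key, Finset.sum_nonneg (s := X.faces.filter (fun T => T.card = d + 1 ∧ τ ⊆ T)) (f := X.w) (fun T hT => (X.w_pos T (Finset.mem_filter.1 hT).1).le)]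

theorem sAdj_one (X : WSC V d) {c : ℕ} (hc : c ≤ d) {τ : Finset V} (hτ : τ ∈ X.faces)
    (hcard : τ.card = c) (F : Finset V → ℝ)
    (hF : ∀ σ ∈ X.toWFam.dimFaces (c+1), F σ = 1) :
    X.toWFam.sAdj c F τ = 1 := by
  unfold WFam.sAdj WFam.link
  have hterm : ∀ σ ∈ (X.toWFam.dimFaces (c+1)).filter (fun σ => τ ⊆ σ),
      X.w (σ \ τ ∪ τ) / ((((σ \ τ).card + τ.card).choose τ.card : ℝ) * X.w τ) * F σ
      = (((c:ℝ)+1) * X.w τ)⁻¹ * X.w σ := by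
    intro σ hσ
    obtain ⟨hσd, hsub⟩ := Finset.mem_filter.1 hσ
    obtain ⟨hσf, hσc⟩ := mem_dimFaces.1 hσd
    have hsd : (σ \ τ).card = 1 := by rw [Finset.card_sdiff_of_subset hsub]; omega
    have hun : σ \ τ ∪ τ = σ := Finset.sdiff_union_of_subset hsub
    have hch : ((σ \ τ).card + τ.card).choose τ.card = c + 1 := by
      rw [hsd, hcard, show 1 + c = c + 1 from by omega, Nat.choose_succ_self_right]
    rw [hsd, hun, hcard,
      show (1 + c).choose c = c + 1 from by
        rw [show 1 + c = c + 1 from by omega, Nat.choose_succ_self_right], hF σ hσd]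
    push_cast
    rw [mul_one, div_eq_mul_inv, mul_comm]
  rw [Finset.sum_congr rfl hterm, ← Finset.mul_sum, sum_up X hc hτ hcard]
  have hwτ : X.w τ ≠ 0 := (X.w_pos τ hτ).ne'
  have hc1 : ((c:ℝ)+1) ≠ 0 := by positivity
  field_simp

theorem sAdjIter_one (X : WSC V d) (n : ℕ) :
    ∀ (a : ℕ), a + n ≤ d + 1 →
    ∀ F : Finset V → ℝ, (∀ σ ∈ X.toWFam.dimFaces (a+n), F σ = 1) →
    ∀ τ ∈ X.toWFam.dimFaces a, X.toWFam.sAdjIter a n F τ = 1 := by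
  induction n with
  | zero => intro a _ F hF τ hτ; exact hF τ hτ
  | succ n ih =>
    intro a ha F hF τ hτ
    obtain ⟨hτf, hτc⟩ := mem_dimFaces.1 hτ
    show X.toWFam.sAdj a (X.toWFam.sAdjIter (a+1) n F) τ = 1
    refine sAdj_one X (by omega) hτf hτc _ ?_
    intro σ hσ
    exact ih (a+1) (by omega) F
      (fun σ' hσ' => hF σ' (by rwa [show a+1+n = a+(n+1) from by omega] at hσ')) σ hσ

set_option maxHeartbeats 2000000

/-- For `1 ≤ k ≤ d` and a proper `0`-level cochain
`f ∈ C^k(X;ℝ)`, i.e. `f ∈ im(d_{k-1} ⋯ d_0)` (on the faces of `X(k)`) and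
`d_{-1}^* ⋯ d_{k-1}^* f = 0`, there exists a `0`-cochain `g ∈ C^0(X;ℝ)` with:
(1) `⟨g, 1⟩ = 0`; (2) `‖g‖² = ‖f‖²`; and
(3) `‖d_0^* ⋯ d_{k-1}^* f‖² = ‖d_{k-1} ⋯ d_0 g‖²`. -/
theorem proper_zero_level_descend (X : WSC V d) (k : ℕ) (hk1 : 1 ≤ k) (hk : k ≤ d)
    (f : Finset V → ℝ)
    (him : ∃ h : Finset V → ℝ,
      ∀ σ ∈ X.toWFam.dimFaces (k + 1), f σ = sDiffIter 1 k h σ)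
    (hker : X.toWFam.sAdjIter 0 (k + 1) f ∅ = 0) :
    ∃ g : Finset V → ℝ,
      X.toWFam.inner 1 g (fun _ => 1) = 0 ∧
      X.toWFam.norm2 1 g = X.toWFam.norm2 (k + 1) f ∧
      X.toWFam.norm2 1 (X.toWFam.sAdjIter 1 k f) =
        X.toWFam.norm2 (k + 1) (sDiffIter 1 k g) := by
  obtain ⟨h, him⟩ := him
  -- notations
  set u : Finset V → ℝ := X.toWFam.sAdjIter 1 k f with hudef
  set A : ℝ := X.toWFam.norm2 (k+1) f with hAdef
  set B : ℝ := X.toWFam.norm2 1 u with hBdef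
  set H : ℝ := X.toWFam.norm2 1 h with hHdef
  set Q : ℝ := X.toWFam.norm2 (k+1) (sDiffIter 1 k u) with hQdef
  set R : ℝ := X.toWFam.inner (k+1) (sDiffIter 1 k h) (sDiffIter 1 k u) with hRdef
  have hkk : 1 + k = k + 1 := by omega
  -- ⟨u, 1⟩ = 0
  have hker' : X.toWFam.sAdj 0 u ∅ = 0 := hker
  clear_value u A B H Q R
  have hu1 : X.toWFam.inner 1 u (fun _ => 1) = 0 := by
    have hw0 : X.w ∅ ≠ 0 := (X.w_pos ∅ X.empty_mem).ne'
    have key : X.toWFam.inner 1 u (fun _ => 1) = X.w ∅ * X.toWFam.sAdj 0 u ∅ := by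
      unfold WFam.inner WFam.sAdj WFam.link
      rw [Finset.mul_sum]
      have hset : ((X.toWFam.dimFaces (0+1)).filter (fun σ => (∅ : Finset V) ⊆ σ))
          = X.toWFam.dimFaces 1 := by
        rw [Finset.filter_true_of_mem (fun _ _ => Finset.empty_subset _)]
      rw [hset]
      refine Finset.sum_congr rfl fun σ hσ => ?_
      simp only [Finset.sdiff_empty, Finset.union_empty, Finset.card_empty,
        Nat.add_zero, Nat.choose_zero_right, Nat.cast_one, one_mul]
      field_simp
    rw [key, hker', mul_zero]
  -- adjointness instances
  have hadj : ∀ F : Finset V → ℝ,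
      X.toWFam.inner (k+1) (sDiffIter 1 k F) f = X.toWFam.inner 1 F u := by
    intro F
    rw [← hkk, hudef]
    exact adj_iter X k 1 F f
  -- ⟨h, u⟩ = A
  have hhu : X.toWFam.inner 1 h u = A := by
    rw [← hadj h, hAdef]
    exact inner_congr _ _ (fun σ hσ => (him σ hσ).symm) (fun _ _ => rfl)
  -- ‖sDiffIter h‖² = A
  have hFhA : X.toWFam.norm2 (k+1) (sDiffIter 1 k h) = A := by
    rw [hAdef]
    exact inner_congr _ _ (fun σ hσ => (him σ hσ).symm) (fun σ hσ => (him σ hσ).symm)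
  -- ⟨sDiffIter u, f⟩ = B
  have hBuf : X.toWFam.inner (k+1) (sDiffIter 1 k u) f = B := by
    rw [hBdef]; exact hadj u
  -- ⟨h, 1⟩ = 0
  have hone : ∀ σ ∈ X.toWFam.dimFaces (k+1), sDiffIter 1 k (fun _ => (1:ℝ)) σ = 1 :=
    fun σ hσ => sDiffIter_one k σ (mem_dimFaces.1 hσ).2
  have hh1 : X.toWFam.inner 1 h (fun _ => 1) = 0 := by
    have e1 : X.toWFam.inner 1 h (fun _ => 1)
        = X.toWFam.inner 1 h (X.toWFam.sAdjIter 1 k (fun _ => 1)) :=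
      inner_congr _ _ (fun _ _ => rfl)
        (fun τ hτ => (sAdjIter_one X k 1 (by omega) _ (fun _ _ => rfl) τ hτ).symm)
    have e2 : X.toWFam.inner 1 h (X.toWFam.sAdjIter 1 k (fun _ => 1))
        = X.toWFam.inner (1+k) (sDiffIter 1 k h) (fun _ => 1) :=
      (adj_iter X k 1 h (fun _ => 1)).symm
    rw [e1, e2, hkk]
    calc X.toWFam.inner (k+1) (sDiffIter 1 k h) (fun _ => 1)
        = X.toWFam.inner (k+1) f (fun _ => 1) :=
          inner_congr _ _ (fun σ hσ => (him σ hσ).symm) (fun _ _ => rfl)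
      _ = X.toWFam.inner (k+1) (fun _ => 1) f := inner_comm _ _ _ _
      _ = X.toWFam.inner (k+1) (sDiffIter 1 k (fun _ => (1:ℝ))) f :=
          inner_congr _ _ (fun σ hσ => (hone σ hσ).symm) (fun _ _ => rfl)
      _ = X.toWFam.inner 1 (fun _ => 1) u := hadj (fun _ => 1)
      _ = X.toWFam.inner 1 u (fun _ => 1) := inner_comm _ _ _ _
      _ = 0 := hu1
  -- Cauchy–Schwarz consequences
  have hcs1 : A^2 ≤ H * B := by
    have := cs X 1 h u
    rwa [hhu, ← hHdef, ← hBdef] at this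
  have hcs2 : B^2 ≤ Q * A := by
    have := cs X (k+1) (sDiffIter 1 k u) f
    rwa [hBuf, ← hQdef, ← hAdef] at this
  have hA0 : 0 ≤ A := by rw [hAdef]; exact norm2_nonneg X (k+1) f
  have hB0 : 0 ≤ B := by rw [hBdef]; exact norm2_nonneg X 1 u
  have hH0 : 0 ≤ H := by rw [hHdef]; exact norm2_nonneg X 1 h
  rcases eq_or_lt_of_le hA0 with hA | hA
  · -- degenerate case A = 0, take g = 0
    refine ⟨fun _ => 0, ?_, ?_, ?_⟩
    · unfold WFam.inner; simp
    · rw [← hA]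
      unfold WFam.norm2 WFam.inner; simp
    · rw [sDiffIter_zero 1 k]
      have hQA : Q * A = 0 := by rw [← hA, mul_zero]
      have hBle : B ≤ 0 := by nlinarith [hcs2, hQA]
      have hB : B = 0 := le_antisymm hBle hB0
      rw [hB]
      unfold WFam.norm2 WFam.inner; simp
  · -- main case A > 0
    have hH : 0 < H := by nlinarith [hcs1, mul_pos hA hA]
    have hB : 0 < B := by nlinarith [hcs1, mul_pos hA hA, hH0]
    obtain ⟨α, hα0, hα2⟩ : ∃ α : ℝ, 0 ≤ α ∧ α^2 = A/B :=
      ⟨Real.sqrt (A/B), Real.sqrt_nonneg _, Real.sq_sqrt (div_nonneg hA.le hB.le)⟩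
    obtain ⟨β, hβ0, hβ2⟩ : ∃ β : ℝ, 0 ≤ β ∧ β^2 = A/H :=
      ⟨Real.sqrt (A/H), Real.sqrt_nonneg _, Real.sq_sqrt (div_nonneg hA.le hH.le)⟩
    have hα2B : α^2 * B = A := by rw [hα2, div_mul_cancel₀ _ hB.ne']
    have hβ2H : β^2 * H = A := by rw [hβ2, div_mul_cancel₀ _ hH.ne']
    have hq1pos : ∀ t ∈ Set.Icc (0:ℝ) 1,
        0 < ((1-t)*β)^2*H + 2*((1-t)*β)*(t*α)*A + (t*α)^2*B := by
      rintro t ⟨ht0, ht1⟩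
      have e1 : ((1-t)*β)^2*H = (1-t)^2*A := by
        rw [mul_pow, mul_assoc, hβ2H]
      have e2 : (t*α)^2*B = t^2*A := by
        rw [mul_pow, mul_assoc, hα2B]
      rw [e1, e2]
      have hcr : 0 ≤ 2*((1-t)*β)*(t*α)*A :=
        mul_nonneg (mul_nonneg (mul_nonneg (by norm_num)
          (mul_nonneg (by linarith) hβ0)) (mul_nonneg ht0 hα0)) hA.le
      nlinarith [sq_nonneg (2*t-1), mul_pos hA (show (0:ℝ) < (1-t)^2 + t^2 by
        nlinarith [sq_nonneg (2*t-1)])]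
    have hcont : ContinuousOn (fun t : ℝ =>
        A * (((1-t)*β)^2*A + 2*((1-t)*β)*(t*α)*R + (t*α)^2*Q)
          / (((1-t)*β)^2*H + 2*((1-t)*β)*(t*α)*A + (t*α)^2*B)) (Set.Icc 0 1) := by
      apply ContinuousOn.div
      · fun_prop
      · fun_prop
      · exact fun t ht => (hq1pos t ht).ne'
    have hmem : B ∈ Set.Icc
        ((fun t : ℝ =>
          A * (((1-t)*β)^2*A + 2*((1-t)*β)*(t*α)*R + (t*α)^2*Q)
            / (((1-t)*β)^2*H + 2*((1-t)*β)*(t*α)*A + (t*α)^2*B)) 0)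
        ((fun t : ℝ =>
          A * (((1-t)*β)^2*A + 2*((1-t)*β)*(t*α)*R + (t*α)^2*Q)
            / (((1-t)*β)^2*H + 2*((1-t)*β)*(t*α)*A + (t*α)^2*B)) 1) := by
      constructor
      · show A * (((1-(0:ℝ))*β)^2*A + 2*((1-(0:ℝ))*β)*((0:ℝ)*α)*R + ((0:ℝ)*α)^2*Q)
            / (((1-(0:ℝ))*β)^2*H + 2*((1-(0:ℝ))*β)*((0:ℝ)*α)*A + ((0:ℝ)*α)^2*B) ≤ B
        have e0 : ((1-(0:ℝ))*β)^2 = β^2 := by norm_num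
        rw [e0]
        norm_num
        rw [hβ2]
        rw [div_le_iff₀ (by positivity)]
        have : A / H * H = A := by field_simp
        nlinarith [this]
      · show B ≤ A * (((1-(1:ℝ))*β)^2*A + 2*((1-(1:ℝ))*β)*((1:ℝ)*α)*R + ((1:ℝ)*α)^2*Q)
            / (((1-(1:ℝ))*β)^2*H + 2*((1-(1:ℝ))*β)*((1:ℝ)*α)*A + ((1:ℝ)*α)^2*B)
        norm_num
        rw [hα2]
        rw [le_div_iff₀ (by positivity)]
        have : A / B * B = A := by field_simp
        nlinarith [this]
    obtain ⟨t, ht, hφt⟩ := intermediate_value_Icc zero_le_one hcont hmem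
    simp only [] at hφt
    obtain ⟨ht0, ht1⟩ := ht
    have hq1t := hq1pos t ⟨ht0, ht1⟩
    obtain ⟨s, hs2⟩ : ∃ s : ℝ,
        s^2 = A / (((1-t)*β)^2*H + 2*((1-t)*β)*(t*α)*A + (t*α)^2*B) :=
      ⟨Real.sqrt _, Real.sq_sqrt (div_nonneg hA.le hq1t.le)⟩
    refine ⟨fun τ => (s*((1-t)*β)) * h τ + (s*(t*α)) * u τ, ?_, ?_, ?_⟩
    · rw [inner_combo_left, hh1, hu1]
      ring
    · rw [norm2_combo, ← hHdef, ← hBdef, hhu]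
      have : (s*((1-t)*β))^2 * H + 2*(s*((1-t)*β))*(s*(t*α)) * A + (s*(t*α))^2 * B
          = s^2 * (((1-t)*β)^2*H + 2*((1-t)*β)*(t*α)*A + (t*α)^2*B) := by ring
      rw [this, hs2]
      exact div_mul_cancel₀ _ hq1t.ne'
    · rw [sDiffIter_combo, norm2_combo, hFhA, ← hRdef, ← hQdef]
      have : (s*((1-t)*β))^2 * A + 2*(s*((1-t)*β))*(s*(t*α)) * R + (s*(t*α))^2 * Q
          = s^2 * (((1-t)*β)^2*A + 2*((1-t)*β)*(t*α)*R + (t*α)^2*Q) := by ring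
      rw [this, hs2, div_mul_eq_mul_div]
      exact hφt.symm

end

end HDRW
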